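/- Let G be a 2-edge-connected graph with \delta(G) > (\alpha(G) + 4)/2, let e be an edge of G and let G' = G - e. If X is a vertex subset of G' satisfying sun(G' - X) \geq 2|X| - \varepsilon(X) + 1, then |X| \geq 2. -/

import Mathlib

open SimpleGraph

section Defs

variable {V : Type*} {α β : Type*}

/-- A graph is *factor-critical* if deleting any vertex leaves a graph
with a perfect matching. -/
def FactorCritical (G : SimpleGraph V) : Prop :=
  ∀ v : V, ∃ M : (G.induce {u | u ≠ v}).Subgraph, M.IsPerfectMatching

/-- A *sun* is `K₁`, `K₂`, or a graph obtained from a factor-critical graph `R`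
with vertex set `Y = {y₁, …, yₙ}` by adding `n` new vertices `x₁, …, xₙ` and the
pendant edges `y₁x₁, …, yₙxₙ`. -/
def IsSun (G : SimpleGraph V) : Prop :=
  (Nat.card V = 1) ∨ (Nat.card V = 2 ∧ G.Connected) ∨
  (∃ Y : Set V, Y.Nonempty ∧ FactorCritical (G.induce Y) ∧
    ∃ f : (Yᶜ : Set V) ≃ Y, ∀ x : (Yᶜ : Set V), G.neighborSet ↑x = {(↑(f x) : V)})

/-- `sunCount G` is the number of connected components of `G` that are suns. -/
noncomputable def sunCount (G : SimpleGraph V) : ℕ :=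
  Nat.card {c : G.ConnectedComponent // IsSun (G.induce c.supp)}

/-- Number of isolated vertices of a graph. -/
noncomputable def isolatedCount (G : SimpleGraph V) : ℕ :=
  {v : V | ∀ w : V, ¬ G.Adj v w}.ncard

/-- A set of vertices is independent if no two of its vertices are adjacent. -/
def IndepSet (G : SimpleGraph V) (A : Set V) : Prop :=
  A.Pairwise fun u v => ¬ G.Adj u v

/-- The independence number of a graph: the maximum size of an independent set. -/
noncomputable def indepNum (G : SimpleGraph V) : ℕ :=
  sSup {n | ∃ A : Set V, IndepSet G A ∧ A.ncard = n}

/-- The neighborhood `N_G(A)` of a set `A` of vertices: the union of the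
neighborhoods of the vertices of `A`. -/
def neighborSetOf (G : SimpleGraph V) (A : Set V) : Set V :=
  {v | ∃ a ∈ A, G.Adj a v}

/-- `H` is a `P_{≥3}`-factor of `G`: a spanning subgraph of `G` each of whose
connected components is a path on at least `3` vertices. -/
def IsPathFactor (G H : SimpleGraph V) : Prop :=
  H ≤ G ∧ ∀ c : H.ConnectedComponent,
    ∃ n : ℕ, 3 ≤ n ∧ Nonempty ((H.induce c.supp) ≃g pathGraph n)

/-- A connected graph `G` is a `P_{≥3}`-factor covered graph if every edge of `G`
is contained in some `P_{≥3}`-factor of `G`. -/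
def PathFactorCovered (G : SimpleGraph V) : Prop :=
  G.Connected ∧ ∀ e ∈ G.edgeSet, ∃ H : SimpleGraph V, IsPathFactor G H ∧ e ∈ H.edgeSet

/-- A graph `G` is a `P_{≥3}`-factor uniform graph if `G - e` is a
`P_{≥3}`-factor covered graph for every edge `e` of `G`. -/
def PathFactorUniform (G : SimpleGraph V) : Prop :=
  ∀ e ∈ G.edgeSet, PathFactorCovered (G.deleteEdges {e})

/-- The parameter `ε(X)` from Zhou–Zhang's characterization of
`P_{≥3}`-factor covered graphs. -/
noncomputable def eps (G : SimpleGraph V) (X : Set V) : ℕ := by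
  classical
  exact if ¬ IndepSet G X then 2
    else if X.Nonempty ∧ ∃ c : (G.induce Xᶜ).ConnectedComponent,
        ¬ IsSun ((G.induce Xᶜ).induce c.supp) then 1
    else 0

/-- A graph is 2-edge-connected if it is connected and stays connected after
the deletion of any single edge. -/
def TwoEdgeConnected (G : SimpleGraph V) : Prop :=
  G.Connected ∧ ∀ e ∈ G.edgeSet, (G.deleteEdges {e}).Connected

/-- A graph is `k`-connected if it has more than `k` vertices and remains
connected after deleting any fewer than `k` vertices. -/
def KConnected [Fintype V] (k : ℕ) (G : SimpleGraph V) : Prop :=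
  k < Fintype.card V ∧ ∀ S : Set V, S.ncard < k → (G.induce Sᶜ).Connected

/-- The join `G₁ ∨ G₂` of two graphs: take disjoint copies of `G₁` and `G₂`
and add all edges between them. -/
def graphJoin (G : SimpleGraph α) (H : SimpleGraph β) : SimpleGraph (α ⊕ β) where
  Adj x y :=
    match x, y with
    | Sum.inl a, Sum.inl b => G.Adj a b
    | Sum.inr a, Sum.inr b => H.Adj a b
    | Sum.inl _, Sum.inr _ => True
    | Sum.inr _, Sum.inl _ => True
  symm := by
    refine ⟨?_⟩
    rintro (a | a) (b | b) h
    · exact G.symm.symm _ _ h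
    · trivial
    · trivial
    · exact H.symm.symm _ _ h
  loopless := by
    refine ⟨?_⟩
    rintro (a | a) h
    · exact G.loopless.irrefl a h
    · exact H.loopless.irrefl a h

/-- The disjoint union of two graphs. -/
def graphSum (G : SimpleGraph α) (H : SimpleGraph β) : SimpleGraph (α ⊕ β) where
  Adj x y :=
    match x, y with
    | Sum.inl a, Sum.inl b => G.Adj a b
    | Sum.inr a, Sum.inr b => H.Adj a b
    | _, _ => False
  symm := by
    refine ⟨?_⟩
    rintro (a | a) (b | b) h
    · exact G.symm.symm _ _ h
    · exact h.elim
    · exact h.elim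
    · exact H.symm.symm _ _ h
  loopless := by
    refine ⟨?_⟩
    rintro (a | a) h
    · exact G.loopless.irrefl a h
    · exact H.loopless.irrefl a h

/-- `mK2 m` is the disjoint union of `m` copies of `K₂`. -/
def mK2 (m : ℕ) : SimpleGraph (Fin m × Fin 2) where
  Adj p q := p.1 = q.1 ∧ p.2 ≠ q.2
  symm := by refine ⟨?_⟩; rintro p q ⟨h1, h2⟩; exact ⟨h1.symm, h2.symm⟩
  loopless := by refine ⟨?_⟩; rintro p ⟨h1, h2⟩; exact h2 rfl

end Defs



section MyAux
variable {V : Type*}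

lemma nbr_del [DecidableEq V] (G : SimpleGraph V) (a b w : V) :
    G.neighborSet w ⊆ (G.deleteEdges {s(a,b)}).neighborSet w ∪ {if w = a then b else a} := by
  intro u hu
  by_cases h : s(w,u) = s(a,b)
  · right
    rcases Sym2.eq_iff.mp h with ⟨h1, h2⟩ | ⟨h1, h2⟩
    · simp [h1, h2]
    · by_cases hab : w = a
      · have hba : a = b := by rw [← h1, hab]
        simp [hab, h2, hba]
      · simp [hab, h2]
  · left
    rw [mem_neighborSet, deleteEdges_adj]
    exact ⟨hu, by simpa using h⟩

lemma nbr_del' (G : SimpleGraph V) (a b w : V) (hwa : w ≠ a) (hwb : w ≠ b) :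
    G.neighborSet w ⊆ (G.deleteEdges {s(a,b)}).neighborSet w := by
  intro u hu
  rw [mem_neighborSet, deleteEdges_adj]
  refine ⟨hu, ?_⟩
  simp only [Set.mem_singleton_iff, Sym2.eq_iff]
  rintro (⟨h1, h2⟩ | ⟨h1, h2⟩)
  · exact hwa h1
  · exact hwb h1

lemma nbr_comp (G' : SimpleGraph V) (X : Set V)
    (c : (G'.induce Xᶜ).ConnectedComponent) (v : ↥c.supp) :
    G'.neighborSet (↑↑v : V) ⊆
      ((fun u : ↥c.supp => ((u : ↥Xᶜ) : V)) ''
        (((G'.induce Xᶜ).induce c.supp).neighborSet v)) ∪ X := by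
  intro u hu
  by_cases hx : u ∈ X
  · right; exact hx
  · left
    have hxc : u ∈ Xᶜ := hx
    have hu' : (G'.induce Xᶜ).Adj ↑v ⟨u, hxc⟩ := by simpa using hu
    have hmem : (⟨u, hxc⟩ : ↥Xᶜ) ∈ c.supp :=
      (ConnectedComponent.sound hu'.symm.reachable).trans v.2
    exact ⟨⟨⟨u, hxc⟩, hmem⟩, by simpa using hu', rfl⟩

lemma main_bound [Fintype V] [DecidableEq V] (G : SimpleGraph V) (a b : V) (X : Set V)
    (c : ((G.deleteEdges {s(a,b)}).induce Xᶜ).ConnectedComponent) (v : ↥c.supp) :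
    (G.neighborSet (↑↑v : V)).ncard ≤
      ((((G.deleteEdges {s(a,b)}).induce Xᶜ).induce c.supp).neighborSet v).ncard
        + X.ncard + 1 := by
  have hinj : Function.Injective (fun u : ↥c.supp => ((u : ↥Xᶜ) : V)) :=
    fun u1 u2 h => Subtype.ext (Subtype.ext h)
  have h1 : G.neighborSet (↑↑v : V) ⊆
      (((fun u : ↥c.supp => ((u : ↥Xᶜ) : V)) ''
        (((G.deleteEdges {s(a,b)}).induce Xᶜ).induce c.supp).neighborSet v) ∪ X)
        ∪ {if (↑↑v : V) = a then b else a} :=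
    (nbr_del G a b _).trans
      (Set.union_subset_union_left _ (nbr_comp (G.deleteEdges {s(a,b)}) X c v))
  refine (Set.ncard_le_ncard h1 (Set.toFinite _)).trans ?_
  have h2 := Set.ncard_union_le (((fun u : ↥c.supp => ((u : ↥Xᶜ) : V)) ''
        (((G.deleteEdges {s(a,b)}).induce Xᶜ).induce c.supp).neighborSet v) ∪ X)
      {if (↑↑v : V) = a then b else a}
  have h3 := Set.ncard_union_le ((fun u : ↥c.supp => ((u : ↥Xᶜ) : V)) ''
        (((G.deleteEdges {s(a,b)}).induce Xᶜ).induce c.supp).neighborSet v) X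
  rw [Set.ncard_image_of_injective _ hinj] at h3
  have h4 : ({if (↑↑v : V) = a then b else a} : Set V).ncard = 1 := Set.ncard_singleton _
  omega

lemma main_bound' [Fintype V] (G : SimpleGraph V) (a b : V) (X : Set V)
    (c : ((G.deleteEdges {s(a,b)}).induce Xᶜ).ConnectedComponent) (v : ↥c.supp)
    (hwa : (↑↑v : V) ≠ a) (hwb : (↑↑v : V) ≠ b) :
    (G.neighborSet (↑↑v : V)).ncard ≤
      ((((G.deleteEdges {s(a,b)}).induce Xᶜ).induce c.supp).neighborSet v).ncard
        + X.ncard := by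
  have hinj : Function.Injective (fun u : ↥c.supp => ((u : ↥Xᶜ) : V)) :=
    fun u1 u2 h => Subtype.ext (Subtype.ext h)
  have h1 : G.neighborSet (↑↑v : V) ⊆
      ((fun u : ↥c.supp => ((u : ↥Xᶜ) : V)) ''
        (((G.deleteEdges {s(a,b)}).induce Xᶜ).induce c.supp).neighborSet v) ∪ X :=
    (nbr_del' G a b _ hwa hwb).trans (nbr_comp (G.deleteEdges {s(a,b)}) X c v)
  refine (Set.ncard_le_ncard h1 (Set.toFinite _)).trans ?_
  have h3 := Set.ncard_union_le ((fun u : ↥c.supp => ((u : ↥Xᶜ) : V)) ''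
        (((G.deleteEdges {s(a,b)}).induce Xᶜ).induce c.supp).neighborSet v) X
  rw [Set.ncard_image_of_injective _ hinj] at h3
  omega

end MyAux


section MySun
lemma sun_small {W : Type*} [Finite W] (H : SimpleGraph W) (hs : IsSun H) :
    (∃ v : W, (H.neighborSet v).ncard = 0) ∨
    (∃ v w : W, v ≠ w ∧ (H.neighborSet v).ncard ≤ 1 ∧ (H.neighborSet w).ncard ≤ 1) := by
  rcases hs with h1 | ⟨h2, _⟩ | ⟨Y, hY, _, f, hf⟩
  · left
    obtain ⟨hsub, ⟨v⟩⟩ := Nat.card_eq_one_iff_unique.mp h1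
    refine ⟨v, ?_⟩
    have : H.neighborSet v = ∅ := by
      ext u
      simp only [mem_neighborSet, Set.mem_empty_iff_false, iff_false]
      intro hadj
      exact H.loopless.irrefl v (by rwa [Subsingleton.elim u v] at hadj)
    simp [this]
  · right
    have : Nontrivial W := (Finite.one_lt_card_iff_nontrivial).mp (by omega)
    obtain ⟨v, w, hvw⟩ := exists_pair_ne W
    have key : ∀ x : W, (H.neighborSet x).ncard ≤ 1 := by
      intro x
      have hsub : H.neighborSet x ⊆ {x}ᶜ := fun u hu => (H.ne_of_adj hu.symm : u ≠ x)
      have hc := Set.ncard_add_ncard_compl ({x} : Set W)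
      have := Set.ncard_le_ncard hsub (Set.toFinite _)
      rw [Set.ncard_singleton] at hc
      omega
    exact ⟨v, w, hvw, key v, key w⟩
  · right
    have hY' : Nonempty ↥Y := hY.to_subtype
    have hYc : Nonempty ↥(Yᶜ) := (Equiv.nonempty_congr f).mpr hY'
    obtain ⟨x0⟩ := hYc
    by_cases hex : ∃ x1 : ↥(Yᶜ), x1 ≠ x0
    · obtain ⟨x1, hx1⟩ := hex
      refine ⟨↑x1, ↑x0, fun h => hx1 (Subtype.ext h), ?_, ?_⟩
      · rw [hf x1]; simp
      · rw [hf x0]; simp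
    · push_neg at hex
      obtain ⟨y0⟩ := hY'
      refine ⟨↑x0, ↑y0, ?_, ?_, ?_⟩
      · intro h
        have : (↑y0 : W) ∈ Yᶜ := h ▸ x0.2
        exact this y0.2
      · rw [hf x0]; simp
      · have hsub : H.neighborSet ↑y0 ⊆ {(↑x0 : W)} := by
          intro u hu
          by_cases hu' : u ∈ Y
          · exfalso
            have : (⟨u, hu'⟩ : ↥Y) = y0 := by
              have : Subsingleton ↥(Yᶜ) := ⟨fun a b => (hex a).trans (hex b).symm⟩
              have : Subsingleton ↥Y := f.symm.subsingleton
              exact Subsingleton.elim _ _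
            have huy : u = ↑y0 := congrArg Subtype.val this
            exact H.loopless.irrefl _ (by rwa [huy] at hu)
          · have : (⟨u, hu'⟩ : ↥(Yᶜ)) = x0 := hex _
            exact congrArg Subtype.val this
        have := Set.ncard_le_ncard hsub (Set.toFinite _)
        simpa using this
end MySun


/-- **Claim 2 in the proof of Theorem 1.3.** Let `G` be 2-edge-connected with
`δ(G) > (α(G)+4)/2`, let `e ∈ E(G)` and `G' = G - e`. If `X ⊆ V(G')` satisfies
`sun(G' - X) ≥ 2|X| - ε(X) + 1`, then `|X| ≥ 2`. -/
theorem stmt9 {V : Type*} [Fintype V] (G : SimpleGraph V) [DecidableRel G.Adj]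
    (h2ec : TwoEdgeConnected G)
    (hdeg : (G.minDegree : ℝ) > ((_root_.indepNum G : ℝ) + 4) / 2)
    (e : Sym2 V) (he : e ∈ G.edgeSet) (X : Set V)
    (hX : (sunCount ((G.deleteEdges {e}).induce Xᶜ) : ℤ) ≥
      2 * X.ncard - eps (G.deleteEdges {e}) X + 1) :
    2 ≤ X.ncard := by
  classical
  by_contra hcon
  push_neg at hcon
  induction e using Sym2.ind with
  | _ a b =>
  have hdegv : ∀ v : V, 3 ≤ (G.neighborSet v).ncard := by
    have hα : 1 ≤ _root_.indepNum G := by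
      have hmem : (1:ℕ) ∈ {n | ∃ A : Set V, IndepSet G A ∧ A.ncard = n} :=
        ⟨{Sym2.Mem.other (Sym2.out_fst_mem (s(a,b)))}, Set.pairwise_singleton _ _,
          Set.ncard_singleton _⟩
      refine le_csSup ⟨Fintype.card V, ?_⟩ hmem
      rintro n ⟨A, -, rfl⟩
      have := Set.ncard_le_ncard (Set.subset_univ A) Set.finite_univ
      simpa [Set.ncard_univ, Nat.card_eq_fintype_card] using this
    have hmin : 3 ≤ G.minDegree := by
      have h1 : (1:ℝ) ≤ (_root_.indepNum G : ℝ) := by exact_mod_cast hα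
      have h2 : ((2:ℕ):ℝ) < (G.minDegree : ℝ) := by push_cast; linarith
      have := Nat.cast_lt.mp h2
      omega
    intro v
    have h1 := G.minDegree_le_degree v
    have h2 : (G.neighborSet v).ncard = G.degree v := by
      simp [Set.ncard_eq_toFinset_card', degree, neighborFinset_def]
    omega
  interval_cases h : X.ncard
  · -- X.ncard = 0
    have hXe : X = ∅ := (Set.ncard_eq_zero (Set.toFinite _)).mp h
    have heps : eps (G.deleteEdges {s(a,b)}) X = 0 := by
      unfold eps
      split_ifs with h1 h2
      · rw [hXe] at h2
        exact absurd h2.1 (by simp)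
      · rfl
      · exact absurd (by rw [hXe]; exact Set.pairwise_empty _) h1
    have hcount : 1 ≤ sunCount ((G.deleteEdges {s(a,b)}).induce Xᶜ) := by
      have heps2 : ((eps (G.deleteEdges {s(a,b)}) X : ℤ)) = 0 := by exact_mod_cast heps
      omega
    have hne : Nonempty {c : ((G.deleteEdges {s(a,b)}).induce Xᶜ).ConnectedComponent //
        IsSun (((G.deleteEdges {s(a,b)}).induce Xᶜ).induce c.supp)} := by
      by_contra hemp
      rw [not_nonempty_iff] at hemp
      rw [sunCount, Nat.card_of_isEmpty] at hcount
      omega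
    obtain ⟨⟨c, hc⟩⟩ := hne
    have hsmall : ∃ v : ↥c.supp,
        ((((G.deleteEdges {s(a,b)}).induce Xᶜ).induce c.supp).neighborSet v).ncard ≤ 1 := by
      rcases sun_small _ hc with ⟨v, hv⟩ | ⟨v, _, _, hv, _⟩
      · exact ⟨v, by omega⟩
      · exact ⟨v, hv⟩
    obtain ⟨v, hv⟩ := hsmall
    have hb := main_bound G a b X c v
    have h3 := hdegv ↑↑v
    omega
  · -- X.ncard = 1
    obtain ⟨x, hXx⟩ := Set.ncard_eq_one.mp h
    have heps : eps (G.deleteEdges {s(a,b)}) X ≤ 1 := by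
      unfold eps
      split_ifs with h1 h2
      · exact le_refl 1
      · omega
      · exact absurd (by rw [hXx]; exact Set.pairwise_singleton _ _) h1
    have hcount : 2 ≤ sunCount ((G.deleteEdges {s(a,b)}).induce Xᶜ) := by
      have heps2 : ((eps (G.deleteEdges {s(a,b)}) X : ℤ)) ≤ 1 := by exact_mod_cast heps
      omega
    have hnt : Nontrivial {c : ((G.deleteEdges {s(a,b)}).induce Xᶜ).ConnectedComponent //
        IsSun (((G.deleteEdges {s(a,b)}).induce Xᶜ).induce c.supp)} := by
      rw [sunCount] at hcount
      exact Finite.one_lt_card_iff_nontrivial.mp (by omega)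
    obtain ⟨⟨c1, hc1⟩, ⟨c2, hc2⟩, hne⟩ := hnt
    have hcc : c1 ≠ c2 := fun hcc => hne (Subtype.ext hcc)
    have process : ∀ (c : ((G.deleteEdges {s(a,b)}).induce Xᶜ).ConnectedComponent),
        IsSun (((G.deleteEdges {s(a,b)}).induce Xᶜ).induce c.supp) →
        ∃ v w : ↥c.supp, (↑↑v : V) ≠ ↑↑w ∧ ((↑↑v : V) = a ∨ (↑↑v : V) = b) ∧
          ((↑↑w : V) = a ∨ (↑↑w : V) = b) := by
      intro c hc
      rcases sun_small _ hc with ⟨v, hv⟩ | ⟨v, w, hvw, hv, hw⟩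
      · exfalso
        have hb := main_bound G a b X c v
        have h3 := hdegv ↑↑v
        omega
      · have force : ∀ (u : ↥c.supp),
            ((((G.deleteEdges {s(a,b)}).induce Xᶜ).induce c.supp).neighborSet u).ncard ≤ 1 →
            ((↑↑u : V) = a ∨ (↑↑u : V) = b) := by
          intro u hu
          by_contra hor
          push_neg at hor
          have hb := main_bound' G a b X c u hor.1 hor.2
          have h3 := hdegv ↑↑u
          omega
        exact ⟨v, w, fun hh => hvw (Subtype.ext (Subtype.ext hh)), force v hv, force w hw⟩
    obtain ⟨v1, v2, h12, ha1, ha2⟩ := process c1 hc1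
    obtain ⟨w1, _, _, hb1, _⟩ := process c2 hc2
    have comp_eq : ∀ (p : ↥c1.supp) (q : ↥c2.supp), (↑↑p : V) = ↑↑q → c1 = c2 := by
      intro p q hpq
      have hp : ((G.deleteEdges {s(a,b)}).induce Xᶜ).connectedComponentMk ↑p = c1 := p.2
      have hq : ((G.deleteEdges {s(a,b)}).induce Xᶜ).connectedComponentMk ↑q = c2 := q.2
      have hpq2 : (↑p : ↥Xᶜ) = ↑q := Subtype.ext hpq
      rw [← hp, ← hq, hpq2]
    have hw1v : (↑↑w1 : V) = ↑↑v1 ∨ (↑↑w1 : V) = ↑↑v2 := by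
      rcases hb1 with hh3 | hh3
      · rcases ha1 with hh1 | hh1
        · exact Or.inl (hh3.trans hh1.symm)
        · rcases ha2 with hh2 | hh2
          · exact Or.inr (hh3.trans hh2.symm)
          · exact absurd (hh1.trans hh2.symm) h12
      · rcases ha1 with hh1 | hh1
        · rcases ha2 with hh2 | hh2
          · exact absurd (hh1.trans hh2.symm) h12
          · exact Or.inr (hh3.trans hh2.symm)
        · exact Or.inl (hh3.trans hh1.symm)
    rcases hw1v with hh | hh
    · exact hcc (comp_eq v1 w1 hh.symm)
    · exact hcc (comp_eq v2 w1 hh.symm)
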